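/- Let (X,d) be a metric space equipped with a measure μ with 0 < μ(X) < ∞, and suppose d(x,y) ≤ D for all x,y ∈ X. Let β > 0, γ > 0, ν > 0, α ∈ (0,1), fix x ∈ X, and let p : (0,β] × X → (0,∞) be a function, measurable in the second variable, such that ∫_X p(t,y) dμ(y) = 1 for all t ∈ (0,β], and such that for all y ∈ X and all t, s > 0 with t + s ≤ β: p(t,x) ≤ p(t+s,y) · ((t+s)/t)^γ · exp(ν·d(x,y)²/(4·s·α)). Then for all t ∈ (0, β/2]: μ(X) · p(t,x) ≤ (β/t)^γ · exp(ν·D²/(2·(β−t)·α)) ≤ (β/t)^γ · exp(ν·D²/(α·β)). -/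

import Mathlib

open MeasureTheory

/-- On-diagonal heat kernel bound from the Harnack inequality. Let `(X,d)`
be a metric space with a measure `μ`, `0 < μ(X) < ∞`, `d(x,y) ≤ D` for all `x,y`,
`β, γ, ν > 0`, `α ∈ (0,1)`, `x ∈ X` fixed, and `p : (0,β] × X → (0,∞)` measurable in the
second variable with `∫_X p(t,y) dμ(y) = 1` for `t ∈ (0,β]` and satisfying the Harnack
bound `p(t,x) ≤ p(t+s,y)((t+s)/t)^γ exp(ν d(x,y)²/(4sα))` whenever `t,s > 0`, `t+s ≤ β`.
Then for all `t ∈ (0,β/2]`: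
`μ(X)·p(t,x) ≤ (β/t)^γ exp(ν D²/(2(β−t)α)) ≤ (β/t)^γ exp(ν D²/(αβ))`. -/
theorem on_diagonal_bound_from_harnack {X : Type*} [MetricSpace X] [MeasurableSpace X]
    (μ : Measure X) (hμ0 : 0 < μ Set.univ) (hμfin : μ Set.univ < ⊤)
    (D β γ ν α : ℝ) (hD : ∀ x y : X, dist x y ≤ D)
    (hβ : 0 < β) (hγ : 0 < γ) (hν : 0 < ν) (hα : α ∈ Set.Ioo (0 : ℝ) 1)
    (x : X) (p : ℝ → X → ℝ)
    (hpmeas : ∀ t ∈ Set.Ioc (0 : ℝ) β, Measurable (p t))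
    (hppos : ∀ t ∈ Set.Ioc (0 : ℝ) β, ∀ y : X, 0 < p t y)
    (hpint : ∀ t ∈ Set.Ioc (0 : ℝ) β, ∫ y, p t y ∂μ = 1)
    (hharnack : ∀ (y : X) (t s : ℝ), 0 < t → 0 < s → t + s ≤ β →
      p t x ≤ p (t + s) y * ((t + s) / t) ^ γ
        * Real.exp (ν * dist x y ^ 2 / (4 * s * α))) :
    ∀ t ∈ Set.Ioc (0 : ℝ) (β / 2),
      (μ Set.univ).toReal * p t x
          ≤ (β / t) ^ γ * Real.exp (ν * D ^ 2 / (2 * (β - t) * α)) ∧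
        (β / t) ^ γ * Real.exp (ν * D ^ 2 / (2 * (β - t) * α))
          ≤ (β / t) ^ γ * Real.exp (ν * D ^ 2 / (α * β)) := by
  intro t ht
  obtain ⟨ht0, ht2⟩ := ht
  obtain ⟨hα0, hα1⟩ := hα
  have hD0 : 0 ≤ D := le_trans (by simp [dist_self]) (hD x x)
  set s : ℝ := (β - t) / 2 with hs_def
  have hβt : t < β := lt_of_le_of_lt ht2 (by linarith)
  have hs : 0 < s := by simp only [hs_def]; linarith
  have hts : 0 < t + s := by linarith
  have htsβ : t + s ≤ β := by simp only [hs_def]; linarith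
  set C : ℝ := (β / t) ^ γ * Real.exp (ν * D ^ 2 / (2 * (β - t) * α)) with hC_def
  have hbase : (0:ℝ) ≤ (β / t) ^ γ := Real.rpow_nonneg (by positivity) γ
  have hptw : ∀ y : X, p t x ≤ C * p (t + s) y := by
    intro y
    have h1 := hharnack y t s ht0 hs htsβ
    have hdist : dist x y ^ 2 ≤ D ^ 2 := by
      have := hD x y
      nlinarith [dist_nonneg (x := x) (y := y)]
    have hexp : Real.exp (ν * dist x y ^ 2 / (4 * s * α))
        ≤ Real.exp (ν * D ^ 2 / (2 * (β - t) * α)) := by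
      have h4s : 4 * s * α = 2 * (β - t) * α := by simp only [hs_def]; ring
      rw [h4s]
      apply Real.exp_le_exp.mpr
      have hden : (0:ℝ) < 2 * (β - t) * α := by nlinarith
      apply div_le_div_of_nonneg_right _ (le_of_lt hden)
      nlinarith
    have hpow : ((t + s) / t) ^ γ ≤ (β / t) ^ γ := by
      apply Real.rpow_le_rpow (by positivity)
      · exact div_le_div_of_nonneg_right htsβ (le_of_lt ht0)
      · exact le_of_lt hγ
    have hppos' := hppos (t + s) ⟨hts, htsβ⟩ y
    calc p t x ≤ p (t + s) y * ((t + s) / t) ^ γ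
          * Real.exp (ν * dist x y ^ 2 / (4 * s * α)) := h1
      _ ≤ p (t + s) y * ((β / t) ^ γ) * Real.exp (ν * D ^ 2 / (2 * (β - t) * α)) := by
          apply mul_le_mul _ hexp (Real.exp_nonneg _) (by positivity)
          exact mul_le_mul_of_nonneg_left hpow (le_of_lt hppos')
      _ = C * p (t + s) y := by rw [hC_def]; ring
  have hint : Integrable (p (t + s)) μ := by
    by_contra h
    have := hpint (t + s) ⟨hts, htsβ⟩
    rw [integral_undef h] at this
    norm_num at this
  have hμfin' : IsFiniteMeasure μ := ⟨lt_of_le_of_lt (le_of_eq (by simp)) hμfin⟩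
  have key : (μ Set.univ).toReal * p t x ≤ C := by
    have h1 : ∫ _ : X, p t x ∂μ = (μ Set.univ).toReal * p t x := by
      simp [integral_const, smul_eq_mul, Measure.real]
    have h2 : ∫ y, C * p (t + s) y ∂μ = C := by
      rw [integral_const_mul, hpint (t + s) ⟨hts, htsβ⟩, mul_one]
    rw [← h1, ← h2]
    exact integral_mono (integrable_const _) (hint.const_mul C) hptw
  refine ⟨key, ?_⟩
  apply mul_le_mul_of_nonneg_left _ hbase
  apply Real.exp_le_exp.mpr
  apply div_le_div_of_nonneg_left (by positivity) (by positivity)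
  nlinarith
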